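/- arXiv:1207.3261 — 3 statements merged into one kernel-verified Lean document; each statement's English description precedes it below -/
import Mathlib

section
/- The L_p power operator satisfies the composition law I_{p,r} ∘ I_{r,q} = I_{p,q} on Hermitian matrices, for any p, q, r ∈ [1,∞). -/
open Matrix
open scoped ComplexOrder

noncomputable section

/-- Square complex matrices. -/
abbrev Mat (d : ℕ) := Matrix (Fin d) (Fin d) ℂ

variable {d : ℕ}

/-- `A ^ r` for a selfadjoint matrix `A`, via the continuous functional calculus. -/
def matPow (A : Mat d) (r : ℝ) : Mat d :=
  cfc (fun x : ℝ => x ^ r) A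

/-- `|A| = (A† A)^{1/2}`. -/
def matAbs (A : Mat d) : Mat d :=
  cfc Real.sqrt (Aᴴ * A)

/-- Matrix logarithm via the continuous functional calculus. -/
def matLog (A : Mat d) : Mat d :=
  cfc Real.log A

/-- The `σ`-weighted `L_p` norm `‖f‖_{p,σ} = (Tr |σ^{1/(2p)} f σ^{1/(2p)}|^p)^{1/p}`. -/
def pnorm (σ f : Mat d) (p : ℝ) : ℝ :=
  ((matPow (matAbs (matPow σ (1/(2*p)) * f * matPow σ (1/(2*p)))) p).trace.re) ^ (1/p)

/-- The `L_p` power operator `I_{p,q}(f) = σ^{-1/(2p)} |σ^{1/(2q)} f σ^{1/(2q)}|^{q/p} σ^{-1/(2p)}`. -/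
def Ipow (σ : Mat d) (p q : ℝ) (f : Mat d) : Mat d :=
  matPow σ (-(1/(2*p))) *
    matPow (matAbs (matPow σ (1/(2*q)) * f * matPow σ (1/(2*q)))) (q/p) *
      matPow σ (-(1/(2*p)))

/-- Any real function is continuous on the (finite) real spectrum of a matrix. -/
lemma contOn (g : ℝ → ℝ) (A : Mat d) : ContinuousOn g (spectrum ℝ A) :=
  Matrix.finite_real_spectrum.continuousOn g

lemma contOn' (g f : ℝ → ℝ) (A : Mat d) : ContinuousOn g (f '' spectrum ℝ A) :=
  (Matrix.finite_real_spectrum.image f).continuousOn g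

lemma posDef_spectrum_pos {σ : Mat d} (hσ : σ.PosDef) :
    ∀ x ∈ spectrum ℝ σ, 0 < x := by
  intro x hx
  rw [hσ.isHermitian.spectrum_real_eq_range_eigenvalues] at hx
  obtain ⟨i, rfl⟩ := hx
  exact hσ.eigenvalues_pos i

lemma matPow_mul_matPow {σ : Mat d} (hσ : σ.PosDef) (s t : ℝ) :
    matPow σ s * matPow σ t = matPow σ (s + t) := by
  unfold matPow
  rw [← cfc_mul _ _ σ (contOn _ _) (contOn _ _)]
  exact cfc_congr fun x hx => (Real.rpow_add (posDef_spectrum_pos hσ x hx) s t).symm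

lemma matPow_zero {σ : Mat d} (hσ : σ.PosDef) : matPow σ 0 = 1 := by
  unfold matPow
  rw [cfc_congr fun x _ => Real.rpow_zero x]
  exact cfc_const_one ℝ σ hσ.isHermitian.isSelfAdjoint

lemma matPow_neg_cancel {σ : Mat d} (hσ : σ.PosDef) (s : ℝ) :
    matPow σ s * matPow σ (-s) = 1 := by
  rw [matPow_mul_matPow hσ, add_neg_cancel, matPow_zero hσ]

lemma matPow_neg_cancel' {σ : Mat d} (hσ : σ.PosDef) (s : ℝ) :
    matPow σ (-s) * matPow σ s = 1 := by
  rw [matPow_mul_matPow hσ, neg_add_cancel, matPow_zero hσ]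

lemma matAbs_of_nonneg {C : Mat d} (hC : IsSelfAdjoint C)
    (h : ∀ x ∈ spectrum ℝ C, 0 ≤ x) : matAbs C = C := by
  have h1 : Cᴴ * C = cfc (fun x : ℝ => x * x) C := by
    rw [cfc_mul _ _ C (contOn _ _) (contOn _ _), cfc_id' ℝ C, ← Matrix.star_eq_conjTranspose C, hC.star_eq]
  rw [matAbs, h1, ← cfc_comp Real.sqrt (fun x : ℝ => x * x) C hC (contOn' _ _ _) (contOn _ _)]
  calc cfc (Real.sqrt ∘ fun x : ℝ => x * x) C
      = cfc (id : ℝ → ℝ) C :=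
        cfc_congr fun x hx => Real.sqrt_mul_self (h x hx)
    _ = C := cfc_id ℝ C

lemma matAbs_spectrum_nonneg (A : Mat d) :
    ∀ x ∈ spectrum ℝ (matAbs A), 0 ≤ x := by
  intro x hx
  rw [matAbs, cfc_map_spectrum Real.sqrt (Aᴴ * A) (IsSelfAdjoint.star_mul_self A)
    (contOn _ _)] at hx
  obtain ⟨y, -, rfl⟩ := hx
  exact Real.sqrt_nonneg y

lemma matPow_spectrum_nonneg {B : Mat d} (hB : IsSelfAdjoint B)
    (h : ∀ x ∈ spectrum ℝ B, 0 ≤ x) (s : ℝ) :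
    ∀ x ∈ spectrum ℝ (matPow B s), 0 ≤ x := by
  intro x hx
  rw [matPow, cfc_map_spectrum _ B hB (contOn _ _)] at hx
  obtain ⟨y, hy, rfl⟩ := hx
  exact Real.rpow_nonneg (h y hy) s

lemma matPow_matPow {B : Mat d} (hB : IsSelfAdjoint B)
    (h : ∀ x ∈ spectrum ℝ B, 0 ≤ x) (s t : ℝ) :
    matPow (matPow B s) t = matPow B (s * t) := by
  unfold matPow
  rw [← cfc_comp (fun x : ℝ => x ^ t) (fun x : ℝ => x ^ s) B hB (contOn' _ _ _) (contOn _ _)]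
  exact cfc_congr fun x hx => by
    simp only [Function.comp_apply]
    rw [← Real.rpow_mul (h x hx)]

/-- composition law `I_{p,r} ∘ I_{r,q} = I_{p,q}`. -/
theorem Ipow_comp (σ f : Mat d) (hσ : σ.PosDef) (hσ1 : σ.trace = 1)
    (hf : f.IsHermitian) (p q r : ℝ) (hp : 1 ≤ p) (hq : 1 ≤ q) (hr : 1 ≤ r) :
    Ipow σ p r (Ipow σ r q f) = Ipow σ p q f := by
  have hq0 : q ≠ 0 := by positivity
  have hr0 : r ≠ 0 := by positivity
  have hp0 : p ≠ 0 := by positivity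
  simp only [Ipow]
  set B : Mat d := matAbs (matPow σ (1/(2*q)) * f * matPow σ (1/(2*q))) with hBdef
  have hBsa : IsSelfAdjoint B := cfc_predicate _ _
  have hBnn : ∀ x ∈ spectrum ℝ B, 0 ≤ x := matAbs_spectrum_nonneg _
  have hinner :
      matPow σ (1/(2*r)) * (matPow σ (-(1/(2*r))) * matPow B (q/r) *
        matPow σ (-(1/(2*r)))) * matPow σ (1/(2*r)) = matPow B (q/r) := by
    calc matPow σ (1/(2*r)) * (matPow σ (-(1/(2*r))) * matPow B (q/r) *
          matPow σ (-(1/(2*r)))) * matPow σ (1/(2*r))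
        = (matPow σ (1/(2*r)) * matPow σ (-(1/(2*r)))) * matPow B (q/r) *
          (matPow σ (-(1/(2*r))) * matPow σ (1/(2*r))) := by noncomm_ring
      _ = matPow B (q/r) := by
          rw [matPow_neg_cancel hσ, matPow_neg_cancel' hσ, one_mul, mul_one]
  have hMsa : IsSelfAdjoint (matPow B (q/r)) := cfc_predicate _ _
  have hMnn : ∀ x ∈ spectrum ℝ (matPow B (q/r)), 0 ≤ x :=
    matPow_spectrum_nonneg hBsa hBnn _
  rw [hinner, matAbs_of_nonneg hMsa hMnn, matPow_matPow hBsa hBnn]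
  congr 2
  field_simp
end
end

section
/- For any positive definite Hermitian f and full-rank density matrix σ, Ent_2(I_{2,1}(f)) = (1/2) Ent_1(f), relating the L_2 and L_1 relative entropies via the power operator. -/
open Matrix
open scoped ComplexOrder

noncomputable section

variable {d : ℕ}

/-- The `L_1` relative entropy. -/
def Ent1 (σ f : Mat d) : ℝ :=
  ((matPow σ (1/2) * f * matPow σ (1/2)) *
      (matLog (matPow σ (1/2) * f * matPow σ (1/2)) - matLog σ)).trace.re
  - ((matPow σ (1/2) * f * matPow σ (1/2)).trace.re) *
      Real.log ((matPow σ (1/2) * f * matPow σ (1/2)).trace.re)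

/-- The `L_2` relative entropy. -/
def Ent2 (σ f : Mat d) : ℝ :=
  (((matPow σ (1/4) * f * matPow σ (1/4)) ^ 2 *
      matLog (matPow σ (1/4) * f * matPow σ (1/4))).trace.re)
  - (1/2) * (((matPow σ (1/4) * f * matPow σ (1/4)) ^ 2 * matLog σ).trace.re)
  - (1/2) * (((matPow σ (1/4) * f * matPow σ (1/4)) ^ 2).trace.re) *
      Real.log (((matPow σ (1/4) * f * matPow σ (1/4)) ^ 2).trace.re)

/-! ### Auxiliary lemmas -/

lemma spec_pos' {A : Mat d} (hA : A.PosDef) : ∀ x ∈ spectrum ℝ A, (0:ℝ) < x := by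
  intro x hx
  rw [hA.1.spectrum_real_eq_range_eigenvalues] at hx
  obtain ⟨i, rfl⟩ := hx
  exact hA.eigenvalues_pos i

lemma contOn_rpow' (r : ℝ) {s : Set ℝ} (hs : ∀ x ∈ s, (0:ℝ) < x) :
    ContinuousOn (fun x : ℝ => x ^ r) s :=
  fun x hx => (Real.continuousAt_rpow_const x r (Or.inl (hs x hx).ne')).continuousWithinAt

lemma posDef_conj' {B M : Mat d} (hB : B.IsHermitian) (hBu : IsUnit B) (hM : M.PosDef) :
    (B * M * B).PosDef := by
  refine Matrix.PosDef.of_dotProduct_mulVec_pos ?_ (fun x hx => ?_)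
  · show (B * M * B)ᴴ = B * M * B
    rw [conjTranspose_mul, conjTranspose_mul, hB.eq, hM.1.eq, Matrix.mul_assoc]
  · have hinj := (Matrix.mulVec_injective_iff_isUnit (A := B)).mpr hBu
    have hBx : B *ᵥ x ≠ 0 := by
      intro h
      apply hx
      have : B *ᵥ x = B *ᵥ 0 := by simpa using h
      simpa using hinj this
    have h1 : star (B *ᵥ x) = star x ᵥ* B := by rw [star_mulVec, hB.eq]
    have key : star x ⬝ᵥ (B * M * B) *ᵥ x = star (B *ᵥ x) ⬝ᵥ M *ᵥ (B *ᵥ x) := by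
      calc star x ⬝ᵥ (B * M * B) *ᵥ x
          = star x ⬝ᵥ B *ᵥ ((M * B) *ᵥ x) := by
            rw [Matrix.mulVec_mulVec, Matrix.mul_assoc]
        _ = (star x ᵥ* B) ⬝ᵥ ((M * B) *ᵥ x) := Matrix.dotProduct_mulVec _ _ _
        _ = star (B *ᵥ x) ⬝ᵥ M *ᵥ (B *ᵥ x) := by rw [h1, Matrix.mulVec_mulVec]
    rw [key]
    exact hM.dotProduct_mulVec_pos hBx

lemma matPow_mul_matPow_neg {σ : Mat d} (hσ : σ.PosDef) (r : ℝ) :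
    matPow σ r * matPow σ (-r) = 1 := by
  have hσs := spec_pos' hσ
  have hσH : IsSelfAdjoint σ := hσ.1.isSelfAdjoint
  rw [matPow, matPow, ← cfc_mul _ _ σ (contOn_rpow' r hσs) (contOn_rpow' (-r) hσs)]
  rw [cfc_congr (g := fun _ : ℝ => (1:ℝ)) (fun x hx => by
    rw [← Real.rpow_add (hσs x hx), add_neg_cancel, Real.rpow_zero])]
  exact cfc_const_one ℝ σ

lemma matPow_neg_mul_matPow {σ : Mat d} (hσ : σ.PosDef) (r : ℝ) :
    matPow σ (-r) * matPow σ r = 1 := by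
  have := matPow_mul_matPow_neg hσ (-r)
  rwa [neg_neg] at this

lemma matPow_half_sq {σ : Mat d} (hσ : σ.PosDef) :
    matPow σ (1/2) * matPow σ (1/2) = σ := by
  have hσs := spec_pos' hσ
  have hσH : IsSelfAdjoint σ := hσ.1.isSelfAdjoint
  rw [matPow, ← cfc_mul _ _ σ (contOn_rpow' _ hσs) (contOn_rpow' _ hσs)]
  rw [cfc_congr (g := fun x : ℝ => x) (fun x hx => by
    rw [← Real.rpow_add (hσs x hx)]; norm_num)]
  exact cfc_id' ℝ σ

lemma matPow_sq' {A : Mat d} (hA : A.PosDef) : matPow A (1/2) ^ 2 = A := by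
  have hAs := spec_pos' hA
  have hAH : IsSelfAdjoint A := hA.1.isSelfAdjoint
  rw [matPow, ← cfc_pow _ 2 A (contOn_rpow' _ hAs)]
  rw [cfc_congr (g := fun x : ℝ => x) (fun x hx => by
    rw [← Real.rpow_natCast (_ ^ (1/2:ℝ)) 2, ← Real.rpow_mul (hAs x hx).le]; norm_num)]
  exact cfc_id' ℝ A

lemma matLog_matPow_half {A : Mat d} (hA : A.PosDef) :
    matLog (matPow A (1/2)) = (1/2:ℝ) • matLog A := by
  have hAs := spec_pos' hA
  have hAH : IsSelfAdjoint A := hA.1.isSelfAdjoint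
  have hlogc : ContinuousOn Real.log ((fun x : ℝ => x ^ (1/2:ℝ)) '' spectrum ℝ A) := by
    apply Real.continuousOn_log.mono
    rintro y ⟨x, hx, rfl⟩
    exact Set.mem_compl_singleton_iff.mpr (Real.rpow_pos_of_pos (hAs x hx) _).ne'
  rw [matLog, matPow,
    ← cfc_comp' Real.log (fun x : ℝ => x ^ (1/2:ℝ)) A hlogc (contOn_rpow' _ hAs) hAH]
  rw [cfc_congr (g := fun x : ℝ => (1/2:ℝ) • Real.log x) (fun x hx => by
    rw [Real.log_rpow (hAs x hx)]; rfl)]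
  exact cfc_smul (1/2:ℝ) Real.log A (Real.continuousOn_log.mono
    (fun y hy => Set.mem_compl_singleton_iff.mpr (hAs y hy).ne'))

lemma matAbs_of_posDef {A : Mat d} (hA : A.PosDef) : matAbs A = A := by
  have hAs := spec_pos' hA
  have hAH : IsSelfAdjoint A := hA.1.isSelfAdjoint
  rw [matAbs, hA.1.eq, ← pow_two]
  rw [← cfc_comp_pow Real.sqrt 2 A Real.continuous_sqrt.continuousOn hAH]
  rw [cfc_congr (g := fun x : ℝ => x) (fun x hx => Real.sqrt_sq (hAs x hx).le)]
  exact cfc_id' ℝ A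

/-- `Ent_2(I_{2,1}(f)) = (1/2) Ent_1(f)`. -/
theorem ent2_Ipow_ent1 (σ f : Mat d)
    (hσ : σ.PosDef) (hσ1 : σ.trace = 1) (hf : f.PosDef) :
    Ent2 σ (Ipow σ 2 1 f) = (1/2) * Ent1 σ f := by
  have hσH : IsSelfAdjoint σ := hσ.1.isSelfAdjoint
  -- s := σ^{1/2}
  have hsH : IsSelfAdjoint (matPow σ (1/2)) := cfc_predicate _ σ
  have hss : matPow σ (1/2) * matPow σ (1/2) = σ := matPow_half_sq hσ
  have hsu : IsUnit (matPow σ (1/2)) := by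
    have h := hσ.isUnit
    rw [← hss, Matrix.isUnit_iff_isUnit_det, Matrix.det_mul] at h
    rw [Matrix.isUnit_iff_isUnit_det]
    exact isUnit_of_mul_isUnit_left h
  -- A := σ^{1/2} f σ^{1/2} is positive definite
  have hA : (matPow σ (1/2) * f * matPow σ (1/2)).PosDef := posDef_conj' hsH hsu hf
  -- Simplify `Ipow σ 2 1 f`
  have hI : Ipow σ 2 1 f =
      matPow σ (-(1/4)) * matPow (matPow σ (1/2) * f * matPow σ (1/2)) (1/2) *
        matPow σ (-(1/4)) := by
    rw [Ipow]
    norm_num [matAbs_of_posDef hA]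
  -- σ^{1/4} I σ^{1/4} = A^{1/2}
  have hE : matPow σ (1/4) * Ipow σ 2 1 f * matPow σ (1/4) =
      matPow (matPow σ (1/2) * f * matPow σ (1/2)) (1/2) := by
    rw [hI]
    have h1 := matPow_mul_matPow_neg hσ (1/4)
    have h2 := matPow_neg_mul_matPow hσ (1/4)
    calc matPow σ (1/4) *
          (matPow σ (-(1/4)) * matPow (matPow σ (1/2) * f * matPow σ (1/2)) (1/2) *
            matPow σ (-(1/4))) * matPow σ (1/4)
        = (matPow σ (1/4) * matPow σ (-(1/4))) *
            matPow (matPow σ (1/2) * f * matPow σ (1/2)) (1/2) *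
              (matPow σ (-(1/4)) * matPow σ (1/4)) := by
          simp only [Matrix.mul_assoc]
      _ = matPow (matPow σ (1/2) * f * matPow σ (1/2)) (1/2) := by
          rw [h1, h2, Matrix.one_mul, Matrix.mul_one]
  have hsq := matPow_sq' hA
  have hlog := matLog_matPow_half hA
  rw [Ent2, Ent1, hE, hsq, hlog]
  have hmul : ∀ L : Mat d,
      ((matPow σ (1/2) * f * matPow σ (1/2)) * ((1/2:ℝ) • L)).trace.re =
        (1/2) * ((matPow σ (1/2) * f * matPow σ (1/2)) * L).trace.re := by
    intro L
    rw [mul_smul_comm, Matrix.trace_smul]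
    simp [Complex.real_smul]
  rw [hmul, Matrix.mul_sub, Matrix.trace_sub, Complex.sub_re]
  ring
end
end

section
/- For the depolarizing Liouvillian L(f) = γ(Tr(f)·𝟙/d − f) with γ > 0 and stationary state σ = 𝟙/d, if ρ evolves as ∂_t ρ_t = L*(ρ_t), then the entropy production satisfies −Tr(L*(ρ)(log ρ − log σ)) = γ·D(ρ‖σ) + γ·D(σ‖ρ) ≥ γ·D(ρ‖σ), for any positive definite density matrix ρ. -/
open Matrix
open scoped ComplexOrder

noncomputable section

variable {d : ℕ}

/-- The quantum relative entropy `D(ρ‖σ) = Tr(ρ (log ρ − log σ))` (real part). -/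
def relEnt (ρ σ : Mat d) : ℝ :=
  (ρ * (matLog ρ - matLog σ)).trace.re

/-- Trace of `cfc f A` for a Hermitian matrix is the sum of `f` over eigenvalues. -/
lemma trace_cfc' (A : Mat d) (hA : A.IsHermitian) (f : ℝ → ℝ) :
    (cfc f A).trace = ∑ i, ((f (hA.eigenvalues i) : ℝ) : ℂ) := by
  rw [hA.cfc_eq, Matrix.IsHermitian.cfc, Unitary.conjStarAlgAut_apply, Matrix.trace_mul_cycle]
  rw [Unitary.coe_star_mul_self, one_mul, Matrix.trace_diagonal]
  rfl

/-- Logarithm of the maximally mixed state. -/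
lemma matLog_smul_one' :
    matLog ((d : ℂ)⁻¹ • (1 : Mat d)) = algebraMap ℝ (Mat d) (Real.log (d:ℝ)⁻¹) := by
  have h : (d : ℂ)⁻¹ • (1 : Mat d) = algebraMap ℝ (Mat d) ((d:ℝ)⁻¹) := by
    rw [Algebra.algebraMap_eq_smul_one, ← algebraMap_smul ℂ ((d:ℝ)⁻¹) (1 : Mat d)]
    push_cast
    rfl
  rw [matLog, h, cfc_algebraMap]

/-- entropy production of the depolarizing semigroup. For
`L*(ρ) = γ(Tr(ρ)·𝟙/d − ρ)` with stationary state `σ = 𝟙/d`,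
`−Tr(L*(ρ)(log ρ − log σ)) = γ D(ρ‖σ) + γ D(σ‖ρ) ≥ γ D(ρ‖σ)`. -/
theorem depolarizing_entropy_production (hd : 0 < d) (γ : ℝ) (hγ : 0 < γ)
    (ρ : Mat d) (hρ : ρ.PosDef) (hρ1 : ρ.trace = 1) :
    (-(((γ : ℂ) • ((ρ.trace / (d : ℂ)) • (1 : Mat d) - ρ) *
          (matLog ρ - matLog ((d : ℂ)⁻¹ • (1 : Mat d)))).trace.re)
        = γ * relEnt ρ ((d : ℂ)⁻¹ • (1 : Mat d))
          + γ * relEnt ((d : ℂ)⁻¹ • (1 : Mat d)) ρ) ∧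
    γ * relEnt ρ ((d : ℂ)⁻¹ • (1 : Mat d)) ≤
      -(((γ : ℂ) • ((ρ.trace / (d : ℂ)) • (1 : Mat d) - ρ) *
          (matLog ρ - matLog ((d : ℂ)⁻¹ • (1 : Mat d)))).trace.re) := by
  have hH : ρ.IsHermitian := hρ.1
  set σ : Mat d := (d : ℂ)⁻¹ • (1 : Mat d) with hσdef
  set L : Mat d := matLog ρ - matLog σ with hLdef
  have hd' : (0 : ℝ) < d := by exact_mod_cast hd
  -- trace of matLog ρ
  have hS : (matLog ρ).trace = ((∑ i, Real.log (hH.eigenvalues i) : ℝ) : ℂ) := by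
    rw [matLog, trace_cfc' ρ hH]; push_cast; rfl
  -- sum of eigenvalues = 1
  have hid : ρ.trace = ((∑ i, hH.eigenvalues i : ℝ) : ℂ) := by
    have := trace_cfc' ρ hH id
    rw [cfc_id ℝ ρ] at this
    rw [this]; push_cast; rfl
  have hsum1 : (∑ i, hH.eigenvalues i) = 1 := by
    have := hid.symm.trans hρ1
    exact_mod_cast this
  -- trace of matLog σ
  have hσtr : (matLog σ).trace = ((Real.log (d:ℝ)⁻¹ * d : ℝ) : ℂ) := by
    rw [hσdef, matLog_smul_one', Algebra.algebraMap_eq_smul_one, trace_smul, trace_one]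
    push_cast
    simp [mul_comm]
  have hcast : (d:ℂ)⁻¹ = (((d:ℝ)⁻¹ : ℝ) : ℂ) := by push_cast; rfl
  -- compute relEnt σ ρ
  have hσL : (σ * L).trace = (d:ℂ)⁻¹ * ((matLog ρ).trace - (matLog σ).trace) := by
    rw [hσdef, smul_mul_assoc, one_mul, trace_smul, smul_eq_mul, hLdef, trace_sub]
  have hrelσ : relEnt σ ρ =
      (d:ℝ)⁻¹ * (Real.log (d:ℝ)⁻¹ * d - ∑ i, Real.log (hH.eigenvalues i)) := by
    unfold relEnt
    rw [hσdef, smul_mul_assoc, one_mul, trace_smul, smul_eq_mul, trace_sub, hS, hσtr, hcast,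
      ← Complex.ofReal_sub, ← Complex.ofReal_mul, Complex.ofReal_re]
  -- Klein: relEnt σ ρ ≥ 0
  have hklein : 0 ≤ relEnt σ ρ := by
    rw [hrelσ]
    have hle : (∑ i, Real.log (hH.eigenvalues i)) ≤ Real.log (d:ℝ)⁻¹ * d := by
      have hterm : ∀ i, Real.log (hH.eigenvalues i) ≤
          Real.log (d:ℝ)⁻¹ + ((d:ℝ) * hH.eigenvalues i - 1) := by
        intro i
        have hpos := hρ.eigenvalues_pos i
        have h1 : Real.log (hH.eigenvalues i) =
            Real.log (d:ℝ)⁻¹ + Real.log ((d:ℝ) * hH.eigenvalues i) := by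
          rw [← Real.log_mul (by positivity) (by positivity)]
          congr 1
          field_simp
        rw [h1]
        have := Real.log_le_sub_one_of_pos (x := (d:ℝ) * hH.eigenvalues i) (by positivity)
        linarith
      calc (∑ i, Real.log (hH.eigenvalues i))
          ≤ ∑ i : Fin d, (Real.log (d:ℝ)⁻¹ + ((d:ℝ) * hH.eigenvalues i - 1)) :=
            Finset.sum_le_sum fun i _ => hterm i
        _ = Real.log (d:ℝ)⁻¹ * d := by
            rw [Finset.sum_add_distrib]
            simp [Finset.sum_sub_distrib, ← Finset.mul_sum, hsum1, mul_comm]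
    have : 0 ≤ Real.log (d:ℝ)⁻¹ * d - ∑ i, Real.log (hH.eigenvalues i) := by linarith
    positivity
  -- relEnt σ ρ = -(σ*L).trace.re
  have hneg : relEnt σ ρ = -((σ * L).trace.re) := by
    unfold relEnt
    rw [show matLog σ - matLog ρ = -L from by rw [hLdef, neg_sub], mul_neg, trace_neg,
      Complex.neg_re]
  -- the trace identity
  have htr : (((γ : ℂ) • ((ρ.trace / (d : ℂ)) • (1 : Mat d) - ρ) * L).trace.re)
      = γ * ((σ * L).trace.re - (ρ * L).trace.re) := by
    have h1 : ρ.trace / (d : ℂ) = (d : ℂ)⁻¹ := by rw [hρ1, one_div]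
    rw [h1, smul_mul_assoc, trace_smul, sub_mul, trace_sub, ← hσdef]
    rw [show ((γ:ℂ) • ((σ * L).trace - (ρ * L).trace)) = (γ:ℂ) * ((σ * L).trace - (ρ * L).trace)
      from rfl]
    rw [Complex.re_ofReal_mul, Complex.sub_re]
  have heq : (-(((γ : ℂ) • ((ρ.trace / (d : ℂ)) • (1 : Mat d) - ρ) * L).trace.re)
      = γ * relEnt ρ σ + γ * relEnt σ ρ) := by
    rw [htr, hneg]
    unfold relEnt
    rw [← hLdef]
    ring
  refine ⟨heq, ?_⟩
  rw [heq]
  nlinarith [mul_nonneg hγ.le hklein]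
end
end
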